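/- Let $\mu$ be a partition with $n$ parts and conjugate $\mu'=(c_\ell,\ldots,c_1)$. Let $X$ be the set of fillings of the Young diagram of $\mu$ where box $b_{ij}$ contains $|b_{ij}| \geq 1$ copies of $i$, the weight is $\lambda$, and the column weight is $\mathbf{T}$. Let $Y$ be the set of row-weakly-increasing fillings of shape $\lambda/\mu$ of weight $\mathbf{T}$ such that every entry $i$ occurs on or above row $c_i$. Then the map sending $x \in X$ to the filling $y$ where row $i$ of $y$ contains exactly $|b_{ij}(x)| - 1$ copies of $j$ for each $j$ is a bijection from $X$ to $Y$. -/
import Mathlib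


open Finset MvPolynomial

/-- Height of the column with label `j` (columns are labeled `ℓ, ℓ-1, …, 1` from
left to right, so the column labeled `j` is the one in 0-indexed position `ℓ - j`):
the number of rows `i` with `μ i > ℓ - j`. -/
def colHt (n : ℕ) (μ : Fin n → ℕ) (ℓ j : ℕ) : ℕ :=
  (Finset.univ.filter fun i : Fin n => ℓ - j < μ i).card

/-- A multiset tableau of shape `μ` (a partition with `n` parts, all parts `≤ ℓ`).
`box i j` is the content of the box in row `i` (0-indexed) and the column
labeled `j` (labels `ℓ, …, 1` from left to right); boxes outside the diagram are
empty.  Entries are positive integers; the maximum of each box is strictly less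
than the minimum of the box below it and weakly less than the minimum of the box
to its right (the box to the right of column label `j+1` is column label `j`). -/
structure MTab (n ℓ : ℕ) (μ : Fin n → ℕ) where
  box : Fin n → ℕ → Multiset ℕ
  pos : ∀ i j, ∀ a ∈ box i j, 1 ≤ a
  supp : ∀ i j, box i j ≠ 0 ↔ (1 ≤ j ∧ j ≤ ℓ ∧ ℓ - j < μ i)
  right : ∀ (i : Fin n) (j : ℕ), ∀ a ∈ box i (j + 1), ∀ z ∈ box i j, a ≤ z
  below : ∀ (i i' : Fin n) (j : ℕ), (i : ℕ) + 1 = (i' : ℕ) →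
    ∀ a ∈ box i j, ∀ z ∈ box i' j, a < z

/-- The weight of a multiset tableau: the number of entries equal to `v`. -/
def MTab.wt {n ℓ : ℕ} {μ : Fin n → ℕ} (P : MTab n ℓ μ) (v : ℕ) : ℕ :=
  ∑ i : Fin n, ∑ j ∈ Finset.Icc 1 ℓ, (P.box i j).count v

/-- The column weight of a multiset tableau at column label `j`: the number of
entries in column `j` minus the height of column `j`. -/
def MTab.cw {n ℓ : ℕ} {μ : Fin n → ℕ} (P : MTab n ℓ μ) (j : ℕ) : ℕ :=
  (∑ i : Fin n, (P.box i j).card) - colHt n μ ℓ j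

/-- The maximality conditions for a multiset tableau: box `b_{ij}` (row `i`,
0-indexed, column label `j`) contains only entries equal to `i + 1` (the paper's
1-indexed row number), and for all adjacent rows `i, i+1` and all `k ≥ 0`,
`∑_{1 ≤ j ≤ k} (|b_{(i+1)j}| - |b_{i(j-1)}|) ≤ 1`. -/
def MTab.IsMax {n ℓ : ℕ} {μ : Fin n → ℕ} (P : MTab n ℓ μ) : Prop :=
  (∀ (i : Fin n) (j : ℕ), ∀ a ∈ P.box i j, a = (i : ℕ) + 1) ∧
  (∀ (i i' : Fin n), (i : ℕ) + 1 = (i' : ℕ) → ∀ k : ℕ,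
    (∑ j ∈ Finset.Icc 1 k, (((P.box i' j).card : ℤ) - ((P.box i (j - 1)).card : ℤ))) ≤ 1)


/-- A row-weakly-increasing filling of the skew shape `λ/μ` (0-indexed columns,
value `0` marking empty cells) with values in `{1, …, ℓ}` such that every entry
`v` occurs on or above row `c_v = colHt n μ ℓ v` (no column condition imposed). -/
structure YTab (n ℓ : ℕ) (μ lam : Fin n → ℕ) where
  entry : Fin n → ℕ → ℕ
  supp : ∀ i j, entry i j ≠ 0 ↔ (μ i ≤ j ∧ j < lam i)
  le_alpha : ∀ i j, entry i j ≤ ℓ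
  row : ∀ (i : Fin n) (j j' : ℕ), j ≤ j' → entry i j ≠ 0 → entry i j' ≠ 0 →
    entry i j ≤ entry i j'
  restrict : ∀ i j, entry i j ≠ 0 → (i : ℕ) < colHt n μ ℓ (entry i j)

/-- The weight of such a filling: the number of entries equal to `v ≥ 1`. -/
def YTab.wt {n ℓ : ℕ} {μ lam : Fin n → ℕ} (y : YTab n ℓ μ lam) (v : ℕ) : ℕ :=
  ∑ i : Fin n, ((Finset.range (lam i)).filter fun j => y.entry i j = v).card

namespace Stmt8Aux

variable {n ℓ : ℕ} {μ lam : Fin n → ℕ}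

/-- general helper: sum of (c a - 1) plus number of a with c a ≥ 1 equals sum of c a. -/
lemma sum_sub_one_add {α : Type*} (s : Finset α) (c : α → ℕ) [DecidablePred fun a => 1 ≤ c a] :
    (∑ a ∈ s, (c a - 1)) + (s.filter fun a => 1 ≤ c a).card = ∑ a ∈ s, c a := by
  rw [Finset.card_filter, ← Finset.sum_add_distrib]
  exact Finset.sum_congr rfl fun a _ => by split <;> omega

/-- fiber-count swap lemma -/
lemma sum_card_filter_eq (t : Finset ℕ) (s : Finset ℕ) (f : ℕ → ℕ) :
    ∑ j ∈ s, (t.filter fun jj => f jj = j).card = (t.filter fun jj => f jj ∈ s).card := by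
  simp_rw [Finset.card_filter]
  rw [Finset.sum_comm]
  refine Finset.sum_congr rfl fun jj _ => ?_
  rw [Finset.sum_ite_eq s (f jj) (fun _ => 1)]

lemma lt_colHt_iff (hμ : ∀ i j : Fin n, i ≤ j → μ j ≤ μ i) (i : Fin n) (v : ℕ) :
    (i : ℕ) < colHt n μ ℓ v ↔ ℓ - v < μ i := by
  constructor
  · intro h
    by_contra hc
    push_neg at hc
    have hsub : (Finset.univ.filter fun i' : Fin n => ℓ - v < μ i') ⊆ Finset.Iio i := by
      intro i' hi'
      simp only [Finset.mem_filter, Finset.mem_univ, true_and] at hi'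
      simp only [Finset.mem_Iio]
      by_contra h2
      push_neg at h2
      exact absurd (le_trans (hμ i i' h2) hc) (not_le.2 hi')
    have := Finset.card_le_card hsub
    rw [Fin.card_Iio] at this
    exact absurd h (by unfold colHt; omega)
  · intro h
    have hsub : Finset.Iic i ⊆ Finset.univ.filter fun i' : Fin n => ℓ - v < μ i' := by
      intro i' hi'
      simp only [Finset.mem_Iic] at hi'
      simp only [Finset.mem_filter, Finset.mem_univ, true_and]
      exact lt_of_lt_of_le h (hμ i' i hi')
    have := Finset.card_le_card hsub
    rw [Fin.card_Iic] at this
    unfold colHt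
    omega

/-- Cumulative sums along a row. -/
def Ssum (x : MTab n ℓ μ) (i : Fin n) (j : ℕ) : ℕ :=
  μ i + ∑ j' ∈ Finset.Icc 1 j, ((x.box i j').card - 1)

lemma Ssum_mono (x : MTab n ℓ μ) (i : Fin n) : Monotone (Ssum x i) := by
  intro j j' hj
  unfold Ssum
  exact Nat.add_le_add_left (Finset.sum_le_sum_of_subset
    (Finset.Icc_subset_Icc_right hj)) _

lemma Ssum_zero (x : MTab n ℓ μ) (i : Fin n) : Ssum x i 0 = μ i := by
  simp [Ssum]

lemma Ssum_step (x : MTab n ℓ μ) (i : Fin n) (j : ℕ) (hj : 1 ≤ j) :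
    Ssum x i j = Ssum x i (j - 1) + ((x.box i j).card - 1) := by
  unfold Ssum
  have h : Finset.Icc 1 j = insert j (Finset.Icc 1 (j - 1)) := by
    ext a; simp only [Finset.mem_Icc, Finset.mem_insert]; omega
  rw [h, Finset.sum_insert (by simp only [Finset.mem_Icc]; omega)]
  omega

lemma row_sum_card (x : MTab n ℓ μ)
    (ha : ∀ (i : Fin n) (j : ℕ), ∀ a ∈ x.box i j, a = (i : ℕ) + 1)
    (hw : ∀ i : Fin n, x.wt ((i : ℕ) + 1) = lam i) (i : Fin n) :
    ∑ j ∈ Finset.Icc 1 ℓ, (x.box i j).card = lam i := by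
  have h := hw i
  unfold MTab.wt at h
  rw [Finset.sum_eq_single i (fun i' _ hne => ?_) (by simp)] at h
  · rw [← h]
    refine Finset.sum_congr rfl fun j _ => ?_
    have hrep : x.box i j = Multiset.replicate (Multiset.card (x.box i j)) ((i : ℕ) + 1) :=
      Multiset.eq_replicate_card.2 (ha i j)
    conv_rhs => rw [hrep]
    simp [Multiset.count_replicate]
  · refine Finset.sum_eq_zero fun j _ => Multiset.count_eq_zero.2 fun hmem => ?_
    have := ha i' j _ hmem
    exact hne (Fin.ext (by omega))

lemma valid_filter_card (hn : 0 < n) (hμ : ∀ i j : Fin n, i ≤ j → μ j ≤ μ i)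
    (hl : ℓ = μ ⟨0, hn⟩) (i : Fin n) :
    ((Finset.Icc 1 ℓ).filter fun j => ℓ - j < μ i).card = μ i := by
  have hμℓ : μ i ≤ ℓ := hl ▸ hμ ⟨0, hn⟩ i (by simp [Fin.le_def])
  have h : (Finset.Icc 1 ℓ).filter (fun j => ℓ - j < μ i) = Finset.Ioc (ℓ - μ i) ℓ := by
    ext j; simp only [Finset.mem_filter, Finset.mem_Icc, Finset.mem_Ioc]; omega
  rw [h, Nat.card_Ioc]; omega

lemma Ssum_ell (x : MTab n ℓ μ)
    (hn : 0 < n) (hμ : ∀ i j : Fin n, i ≤ j → μ j ≤ μ i) (hl : ℓ = μ ⟨0, hn⟩)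
    (hsub : ∀ i, μ i ≤ lam i)
    (ha : ∀ (i : Fin n) (j : ℕ), ∀ a ∈ x.box i j, a = (i : ℕ) + 1)
    (hw : ∀ i : Fin n, x.wt ((i : ℕ) + 1) = lam i) (i : Fin n) :
    Ssum x i ℓ = lam i := by
  unfold Ssum
  have h1 := sum_sub_one_add (Finset.Icc 1 ℓ) (fun j => (x.box i j).card)
  have h2 : ((Finset.Icc 1 ℓ).filter fun j => 1 ≤ (x.box i j).card).card
      = ((Finset.Icc 1 ℓ).filter fun j => ℓ - j < μ i).card := by
    refine congrArg Finset.card (Finset.filter_congr fun j hj => ?_)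
    simp only [Finset.mem_Icc] at hj
    have := x.supp i j
    constructor
    · intro hc
      exact ((this.1 (fun h0 => by simp [h0] at hc)).2.2)
    · intro hc
      have : x.box i j ≠ 0 := this.2 ⟨hj.1, hj.2, hc⟩
      have := Multiset.card_pos.2 this
      omega
  rw [h2, valid_filter_card hn hμ hl i, row_sum_card x ha hw i] at h1
  have := hsub i
  omega

lemma Ssum_le_lam (x : MTab n ℓ μ)
    (hn : 0 < n) (hμ : ∀ i j : Fin n, i ≤ j → μ j ≤ μ i) (hl : ℓ = μ ⟨0, hn⟩)
    (hsub : ∀ i, μ i ≤ lam i)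
    (ha : ∀ (i : Fin n) (j : ℕ), ∀ a ∈ x.box i j, a = (i : ℕ) + 1)
    (hw : ∀ i : Fin n, x.wt ((i : ℕ) + 1) = lam i) (i : Fin n) (j : ℕ) :
    Ssum x i j ≤ lam i := by
  rcases le_or_gt j ℓ with h | h
  · rw [← Ssum_ell x hn hμ hl hsub ha hw i]
    exact Ssum_mono x i h
  · rw [← Ssum_ell x hn hμ hl hsub ha hw i]
    unfold Ssum
    refine Nat.add_le_add_left (le_of_eq ?_) _
    refine (Finset.sum_subset (Finset.Icc_subset_Icc_right h.le) fun j' hj' hj'2 => ?_).symm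
    simp only [Finset.mem_Icc] at hj' hj'2
    have : x.box i j' = 0 := by
      by_contra hne
      have := (x.supp i j').1 hne
      omega
    simp [this]
open Classical in
/-- Entry of the skew filling produced from `x`. -/
noncomputable def fEnt (x : MTab n ℓ μ) (i : Fin n) (jj : ℕ) : ℕ :=
  if h : μ i ≤ jj ∧ ∃ j, jj < Ssum x i j then Nat.find h.2 else 0

lemma fEnt_filter (x : MTab n ℓ μ)
    (hn : 0 < n) (hμ : ∀ i j : Fin n, i ≤ j → μ j ≤ μ i) (hl : ℓ = μ ⟨0, hn⟩)
    (hsub : ∀ i, μ i ≤ lam i)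
    (ha : ∀ (i : Fin n) (j : ℕ), ∀ a ∈ x.box i j, a = (i : ℕ) + 1)
    (hw : ∀ i : Fin n, x.wt ((i : ℕ) + 1) = lam i) (i : Fin n) (j : ℕ) (hj : 1 ≤ j) :
    (Finset.range (lam i)).filter (fun jj => fEnt x i jj = j)
      = Finset.Ico (Ssum x i (j - 1)) (Ssum x i j) := by
  ext jj
  simp only [Finset.mem_filter, Finset.mem_range, Finset.mem_Ico]
  constructor
  · rintro ⟨hlt, hf⟩
    unfold fEnt at hf
    split at hf
    case isTrue h =>
      rw [Nat.find_eq_iff] at hf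
      obtain ⟨hPj, hmin⟩ := hf
      have h2 := hmin (j - 1) (by omega)
      exact ⟨by omega, hPj⟩
    case isFalse h => omega
  · rintro ⟨h1, h2⟩
    have hS0 : μ i ≤ Ssum x i (j - 1) := by
      rw [← Ssum_zero x i]; exact Ssum_mono x i (Nat.zero_le _)
    have hcond : μ i ≤ jj ∧ ∃ j', jj < Ssum x i j' := ⟨by omega, ⟨j, h2⟩⟩
    refine ⟨lt_of_lt_of_le h2 (Ssum_le_lam x hn hμ hl hsub ha hw i j), ?_⟩
    unfold fEnt
    rw [dif_pos hcond, Nat.find_eq_iff]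
    exact ⟨h2, fun m hm => not_lt.2 (le_trans (Ssum_mono x i (by omega : m ≤ j - 1)) h1)⟩

lemma fEnt_count (x : MTab n ℓ μ)
    (hn : 0 < n) (hμ : ∀ i j : Fin n, i ≤ j → μ j ≤ μ i) (hl : ℓ = μ ⟨0, hn⟩)
    (hsub : ∀ i, μ i ≤ lam i)
    (ha : ∀ (i : Fin n) (j : ℕ), ∀ a ∈ x.box i j, a = (i : ℕ) + 1)
    (hw : ∀ i : Fin n, x.wt ((i : ℕ) + 1) = lam i) (i : Fin n) (j : ℕ) (hj : 1 ≤ j) :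
    ((Finset.range (lam i)).filter fun jj => fEnt x i jj = j).card
      = (x.box i j).card - 1 := by
  rw [fEnt_filter x hn hμ hl hsub ha hw i j hj, Nat.card_Ico]
  have := Ssum_step x i j hj
  omega

/-- The forward map on tableaux. -/
noncomputable def fwdY (x : MTab n ℓ μ)
    (hn : 0 < n) (hμ : ∀ i j : Fin n, i ≤ j → μ j ≤ μ i) (hl : ℓ = μ ⟨0, hn⟩)
    (hsub : ∀ i, μ i ≤ lam i)
    (ha : ∀ (i : Fin n) (j : ℕ), ∀ a ∈ x.box i j, a = (i : ℕ) + 1)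
    (hw : ∀ i : Fin n, x.wt ((i : ℕ) + 1) = lam i) : YTab n ℓ μ lam where
  entry := fEnt x
  supp := by
    intro i jj
    unfold fEnt
    split
    case isTrue h =>
      have hfind : Nat.find h.2 ≠ 0 := by
        intro h0
        have := Nat.find_spec h.2
        rw [h0, Ssum_zero] at this
        omega
      obtain ⟨j, hjlt⟩ := h.2
      have : jj < lam i := lt_of_lt_of_le hjlt (Ssum_le_lam x hn hμ hl hsub ha hw i j)
      simp [hfind, h.1, this]
    case isFalse h =>
      simp only [ne_eq, not_true_eq_false, false_iff, not_and, not_lt]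
      intro hle
      exact le_of_not_gt fun hlt =>
        h ⟨hle, ⟨ℓ, by rw [Ssum_ell x hn hμ hl hsub ha hw i]; exact hlt⟩⟩
  le_alpha := by
    intro i jj
    unfold fEnt
    split
    case isTrue h =>
      refine Nat.find_le ?_
      rw [Ssum_ell x hn hμ hl hsub ha hw i]
      obtain ⟨j, hjlt⟩ := h.2
      exact lt_of_lt_of_le hjlt (Ssum_le_lam x hn hμ hl hsub ha hw i j)
    case isFalse h => exact Nat.zero_le _
  row := by
    intro i jj jj' hle hne hne'
    unfold fEnt at hne hne' ⊢
    by_cases h : μ i ≤ jj ∧ ∃ j, jj < Ssum x i j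
    · by_cases h' : μ i ≤ jj' ∧ ∃ j, jj' < Ssum x i j
      · rw [dif_pos h, dif_pos h']
        exact Nat.find_le (lt_of_le_of_lt hle (Nat.find_spec h'.2))
      · rw [dif_neg h'] at hne'; simp at hne'
    · rw [dif_neg h] at hne; simp at hne
  restrict := by
    intro i jj hne
    unfold fEnt at hne ⊢
    by_cases h : μ i ≤ jj ∧ ∃ j, jj < Ssum x i j
    case neg => rw [dif_neg h] at hne; simp at hne
    case pos =>
      rw [dif_pos h] at hne ⊢
      set v := Nat.find h.2 with hv
      have hv1 : 1 ≤ v := by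
        rcases Nat.eq_zero_or_pos v with h0 | h0
        · have := Nat.find_spec h.2
          rw [← hv, h0, Ssum_zero] at this
          omega
        · exact h0
      have hspec : jj < Ssum x i v := Nat.find_spec h.2
      have hmin : ¬ jj < Ssum x i (v - 1) := Nat.find_min h.2 (by omega)
      have hstep := Ssum_step x i v hv1
      have hcard : 2 ≤ (x.box i v).card := by omega
      have hnz : x.box i v ≠ 0 := by
        intro h0; rw [h0] at hcard; simp at hcard
      rw [lt_colHt_iff hμ]
      exact ((x.supp i v).1 hnz).2.2
/-- The box contents of the backward map. -/
def bwdBox (y : YTab n ℓ μ lam) (i : Fin n) (j : ℕ) : Multiset ℕ :=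
  Multiset.replicate
    (if 1 ≤ j ∧ j ≤ ℓ ∧ ℓ - j < μ i then
      1 + ((Finset.range (lam i)).filter fun jj => y.entry i jj = j).card
    else 0) ((i : ℕ) + 1)

lemma bwd_cnt_zero (hμ : ∀ i j : Fin n, i ≤ j → μ j ≤ μ i)
    (y : YTab n ℓ μ lam) (i : Fin n) (j : ℕ) (hj : 1 ≤ j)
    (hinv : ¬(j ≤ ℓ ∧ ℓ - j < μ i)) :
    ((Finset.range (lam i)).filter fun jj => y.entry i jj = j).card = 0 := by
  rw [Finset.card_eq_zero, Finset.filter_eq_empty_iff]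
  intro jj hjj he
  have hne : y.entry i jj ≠ 0 := by omega
  rcases not_and_or.1 hinv with h | h
  · exact h (he ▸ y.le_alpha i jj)
  · have := y.restrict i jj hne
    rw [lt_colHt_iff hμ, he] at this
    exact h this

/-- The backward map on tableaux. -/
def bwdX (y : YTab n ℓ μ lam) : MTab n ℓ μ where
  box := bwdBox y
  pos := by
    intro i j a ha
    have := Multiset.eq_of_mem_replicate ha
    omega
  supp := by
    intro i j
    unfold bwdBox
    split
    case isTrue h =>
      simp only [h, and_true, iff_true, ne_eq]
      intro h0
      have := congrArg Multiset.card h0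
      simp at this
    case isFalse h =>
      simp [Multiset.replicate_zero, h]
  right := by
    intro i j a ha z hz
    have h1 := Multiset.eq_of_mem_replicate ha
    have h2 := Multiset.eq_of_mem_replicate hz
    omega
  below := by
    intro i i' j hii' a ha z hz
    have h1 := Multiset.eq_of_mem_replicate ha
    have h2 := Multiset.eq_of_mem_replicate hz
    omega

lemma bwdX_card (y : YTab n ℓ μ lam) (i : Fin n) (j : ℕ) :
    ((bwdX y).box i j).card
      = if 1 ≤ j ∧ j ≤ ℓ ∧ ℓ - j < μ i then
          1 + ((Finset.range (lam i)).filter fun jj => y.entry i jj = j).card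
        else 0 := by
  simp [bwdX, bwdBox]

lemma bwdX_all (y : YTab n ℓ μ lam) :
    ∀ (i : Fin n) (j : ℕ), ∀ a ∈ (bwdX y).box i j, a = (i : ℕ) + 1 :=
  fun _ _ _ ha => Multiset.eq_of_mem_replicate ha

lemma bwdX_wt (hn : 0 < n) (hμ : ∀ i j : Fin n, i ≤ j → μ j ≤ μ i)
    (hl : ℓ = μ ⟨0, hn⟩) (hsub : ∀ i, μ i ≤ lam i)
    (y : YTab n ℓ μ lam) (i : Fin n) :
    (bwdX y).wt ((i : ℕ) + 1) = lam i := by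
  unfold MTab.wt
  rw [Finset.sum_eq_single i (fun i' _ hne => Finset.sum_eq_zero fun j _ =>
    Multiset.count_eq_zero.2 fun hmem =>
      hne (Fin.ext (by have := Multiset.eq_of_mem_replicate hmem; omega))) (by simp)]
  have hcnt : ∀ j ∈ Finset.Icc 1 ℓ, ((bwdX y).box i j).count ((i : ℕ) + 1)
      = ((bwdX y).box i j).card := by
    intro j _
    rw [bwdX_card]
    show (bwdBox y i j).count _ = _
    unfold bwdBox
    simp [Multiset.count_replicate]
  rw [Finset.sum_congr rfl hcnt]
  have hsplit : ∀ j ∈ Finset.Icc 1 ℓ, ((bwdX y).box i j).card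
      = (if ℓ - j < μ i then 1 else 0)
        + ((Finset.range (lam i)).filter fun jj => y.entry i jj = j).card := by
    intro j hj
    simp only [Finset.mem_Icc] at hj
    rw [bwdX_card]
    by_cases h : ℓ - j < μ i
    · simp [hj.1, hj.2, h]
    · rw [if_neg (by tauto), if_neg h,
        bwd_cnt_zero hμ y i j hj.1 (by tauto)]
  rw [Finset.sum_congr rfl hsplit, Finset.sum_add_distrib]
  rw [← Finset.card_filter, valid_filter_card hn hμ hl i,
    sum_card_filter_eq (Finset.range (lam i)) (Finset.Icc 1 ℓ) (y.entry i)]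
  have hfe : (Finset.range (lam i)).filter (fun jj => y.entry i jj ∈ Finset.Icc 1 ℓ)
      = Finset.Ico (μ i) (lam i) := by
    ext jj
    simp only [Finset.mem_filter, Finset.mem_range, Finset.mem_Icc, Finset.mem_Ico]
    constructor
    · rintro ⟨h1, h2, h3⟩
      have := (y.supp i jj).1 (by omega)
      omega
    · rintro ⟨h1, h2⟩
      have hne : y.entry i jj ≠ 0 := (y.supp i jj).2 ⟨h1, h2⟩
      have := y.le_alpha i jj
      exact ⟨h2, by omega, this⟩
  rw [hfe, Nat.card_Ico]
  have := hsub i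
  omega

lemma bwdX_cw (hμ : ∀ i j : Fin n, i ≤ j → μ j ≤ μ i)
    (y : YTab n ℓ μ lam) (j : ℕ) (hj1 : 1 ≤ j) (hj2 : j ≤ ℓ) :
    (bwdX y).cw j = y.wt j := by
  unfold MTab.cw
  have hsplit : ∀ i : Fin n, ((bwdX y).box i j).card
      = (if ℓ - j < μ i then 1 else 0)
        + ((Finset.range (lam i)).filter fun jj => y.entry i jj = j).card := by
    intro i
    rw [bwdX_card]
    by_cases h : ℓ - j < μ i
    · simp [hj1, hj2, h]
    · rw [if_neg (by tauto), if_neg h, bwd_cnt_zero hμ y i j hj1 (by tauto)]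
  rw [Finset.sum_congr rfl (fun i _ => hsplit i), Finset.sum_add_distrib,
    ← Finset.card_filter]
  unfold YTab.wt colHt
  omega
lemma MTab_ext {x x' : MTab n ℓ μ} (h : x.box = x'.box) : x = x' := by
  cases x; cases x'; cases h; rfl

lemma YTab_ext {y y' : YTab n ℓ μ lam} (h : y.entry = y'.entry) : y = y' := by
  cases y; cases y'; cases h; rfl

lemma bwd_fwd (x : MTab n ℓ μ)
    (hn : 0 < n) (hμ : ∀ i j : Fin n, i ≤ j → μ j ≤ μ i) (hl : ℓ = μ ⟨0, hn⟩)
    (hsub : ∀ i, μ i ≤ lam i)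
    (ha : ∀ (i : Fin n) (j : ℕ), ∀ a ∈ x.box i j, a = (i : ℕ) + 1)
    (hw : ∀ i : Fin n, x.wt ((i : ℕ) + 1) = lam i) :
    bwdX (fwdY x hn hμ hl hsub ha hw) = x := by
  refine MTab_ext ?_
  funext i j
  show bwdBox _ i j = x.box i j
  unfold bwdBox
  have hent : (fwdY x hn hμ hl hsub ha hw).entry = fEnt x := rfl
  rw [hent]
  by_cases h : 1 ≤ j ∧ j ≤ ℓ ∧ ℓ - j < μ i
  · rw [if_pos h, fEnt_count x hn hμ hl hsub ha hw i j h.1]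
    have hnz : x.box i j ≠ 0 := (x.supp i j).2 h
    have hc : 0 < (x.box i j).card := Multiset.card_pos.2 hnz
    rw [(by omega : 1 + ((x.box i j).card - 1) = (x.box i j).card)]
    exact (Multiset.eq_replicate_card.2 (ha i j)).symm
  · rw [if_neg h, Multiset.replicate_zero]
    have : x.box i j = 0 := by
      by_contra hne
      exact h ((x.supp i j).1 hne)
    rw [this]

lemma Ssum_bwd (hμ : ∀ i j : Fin n, i ≤ j → μ j ≤ μ i)
    (y : YTab n ℓ μ lam) (i : Fin n) (j : ℕ) :
    Ssum (bwdX y) i j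
      = μ i + ((Finset.range (lam i)).filter fun jj =>
          y.entry i jj ∈ Finset.Icc 1 j).card := by
  unfold Ssum
  congr 1
  rw [← sum_card_filter_eq (Finset.range (lam i)) (Finset.Icc 1 j) (y.entry i)]
  refine Finset.sum_congr rfl fun j' hj' => ?_
  simp only [Finset.mem_Icc] at hj'
  rw [bwdX_card]
  by_cases h : j' ≤ ℓ ∧ ℓ - j' < μ i
  · rw [if_pos ⟨hj'.1, h.1, h.2⟩]; omega
  · rw [if_neg (by tauto), bwd_cnt_zero hμ y i j' hj'.1 h]

lemma fEnt_bwd (hn : 0 < n) (hμ : ∀ i j : Fin n, i ≤ j → μ j ≤ μ i)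
    (hl : ℓ = μ ⟨0, hn⟩) (hsub : ∀ i, μ i ≤ lam i)
    (y : YTab n ℓ μ lam) (i : Fin n) (jj : ℕ) :
    fEnt (bwdX y) i jj = y.entry i jj := by
  have hSle : ∀ j, Ssum (bwdX y) i j ≤ lam i := by
    intro j
    rw [Ssum_bwd hμ y i j]
    have hsub2 : (Finset.range (lam i)).filter (fun jj' => y.entry i jj' ∈ Finset.Icc 1 j)
        ⊆ Finset.Ico (μ i) (lam i) := by
      intro jj' h
      simp only [Finset.mem_filter, Finset.mem_range, Finset.mem_Icc, Finset.mem_Ico] at h ⊢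
      have hne : y.entry i jj' ≠ 0 := by omega
      exact ⟨((y.supp i jj').1 hne).1, h.1⟩
    have := Finset.card_le_card hsub2
    rw [Nat.card_Ico] at this
    have := hsub i
    omega
  by_cases hs : μ i ≤ jj ∧ jj < lam i
  · have hv0 : y.entry i jj ≠ 0 := (y.supp i jj).2 hs
    set v := y.entry i jj with hvdef
    have hA : jj < Ssum (bwdX y) i v := by
      rw [Ssum_bwd hμ y i v]
      have hsub2 : Finset.Icc (μ i) jj ⊆ (Finset.range (lam i)).filter
          (fun jj' => y.entry i jj' ∈ Finset.Icc 1 v) := by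
        intro jj' hjj'
        simp only [Finset.mem_Icc] at hjj'
        have hlt : jj' < lam i := by omega
        have hne : y.entry i jj' ≠ 0 := (y.supp i jj').2 ⟨hjj'.1, hlt⟩
        simp only [Finset.mem_filter, Finset.mem_range, Finset.mem_Icc]
        exact ⟨hlt, by omega, y.row i jj' jj hjj'.2 hne hv0⟩
      have := Finset.card_le_card hsub2
      rw [Nat.card_Icc] at this
      omega
    have hB : ∀ u, u < v → Ssum (bwdX y) i u ≤ jj := by
      intro u hu
      rw [Ssum_bwd hμ y i u]
      have hsub2 : (Finset.range (lam i)).filter (fun jj' => y.entry i jj' ∈ Finset.Icc 1 u)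
          ⊆ Finset.Ico (μ i) jj := by
        intro jj' h
        simp only [Finset.mem_filter, Finset.mem_range, Finset.mem_Icc, Finset.mem_Ico] at h ⊢
        have hne : y.entry i jj' ≠ 0 := by omega
        refine ⟨((y.supp i jj').1 hne).1, ?_⟩
        by_contra hc
        push_neg at hc
        have := y.row i jj jj' hc hv0 hne
        omega
      have := Finset.card_le_card hsub2
      rw [Nat.card_Ico] at this
      omega
    unfold fEnt
    rw [dif_pos ⟨hs.1, ⟨v, hA⟩⟩, Nat.find_eq_iff]
    exact ⟨hA, fun m hm => not_lt.2 (hB m hm)⟩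
  · have h0 : y.entry i jj = 0 := by
      by_contra hne
      exact hs ((y.supp i jj).1 hne)
    rw [h0]
    unfold fEnt
    rw [dif_neg]
    rintro ⟨hle, jX, hjX⟩
    exact hs ⟨hle, lt_of_lt_of_le hjX (hSle jX)⟩

lemma fwdY_wt (x : MTab n ℓ μ)
    (hn : 0 < n) (hμ : ∀ i j : Fin n, i ≤ j → μ j ≤ μ i) (hl : ℓ = μ ⟨0, hn⟩)
    (hsub : ∀ i, μ i ≤ lam i)
    (ha : ∀ (i : Fin n) (j : ℕ), ∀ a ∈ x.box i j, a = (i : ℕ) + 1)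
    (hw : ∀ i : Fin n, x.wt ((i : ℕ) + 1) = lam i) (v : ℕ) (hv1 : 1 ≤ v) (hv2 : v ≤ ℓ) :
    (fwdY x hn hμ hl hsub ha hw).wt v = x.cw v := by
  unfold YTab.wt MTab.cw
  have hent : (fwdY x hn hμ hl hsub ha hw).entry = fEnt x := rfl
  rw [hent]
  rw [Finset.sum_congr rfl fun i _ => fEnt_count x hn hμ hl hsub ha hw i v hv1]
  have h1 := sum_sub_one_add Finset.univ (fun i : Fin n => (x.box i v).card)
  have h2 : (Finset.univ.filter fun i : Fin n => 1 ≤ (x.box i v).card).card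
      = colHt n μ ℓ v := by
    unfold colHt
    refine congrArg Finset.card (Finset.filter_congr fun i _ => ?_)
    constructor
    · intro hc
      have hnz : x.box i v ≠ 0 := by
        intro h0; rw [h0] at hc; simp at hc
      exact ((x.supp i v).1 hnz).2.2
    · intro hc
      have := Multiset.card_pos.2 ((x.supp i v).2 ⟨hv1, hv2, hc⟩)
      omega
  rw [h2] at h1
  omega
end Stmt8Aux


/-- the map sending `x` (a filling of shape `μ` where box `b_{ij}`
contains `|b_{ij}| ≥ 1` copies of the row value `i+1`, of weight `λ` and column
weight `T`) to the filling `y` of shape `λ/μ` whose row `i` contains exactly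
`|b_{ij}(x)| - 1` copies of `j` for each column label `j`, is a bijection from
`X` to `Y`. -/
theorem stmt8 (n ℓ : ℕ) (hn : 0 < n) (μ lam : Fin n → ℕ)
    (hμ : ∀ i j : Fin n, i ≤ j → μ j ≤ μ i) (hl : ℓ = μ ⟨0, hn⟩)
    (hlam : ∀ i j : Fin n, i ≤ j → lam j ≤ lam i) (hsub : ∀ i, μ i ≤ lam i)
    (T : ℕ → ℕ) :
    ∃ e : {x : MTab n ℓ μ // (∀ (i : Fin n) (j : ℕ), ∀ a ∈ x.box i j, a = (i : ℕ) + 1) ∧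
            (∀ i : Fin n, x.wt ((i : ℕ) + 1) = lam i) ∧
            (∀ j, 1 ≤ j → j ≤ ℓ → x.cw j = T j)} ≃
          {y : YTab n ℓ μ lam // ∀ v, 1 ≤ v → v ≤ ℓ → y.wt v = T v},
      ∀ x (i : Fin n) (j : ℕ), 1 ≤ j →
        ((Finset.range (lam i)).filter fun jj => (e x).1.entry i jj = j).card
          = (x.1.box i j).card - 1 := by
  refine ⟨{
    toFun := fun x => ⟨Stmt8Aux.fwdY x.1 hn hμ hl hsub x.2.1 x.2.2.1, fun v hv1 hv2 => by
      rw [Stmt8Aux.fwdY_wt x.1 hn hμ hl hsub x.2.1 x.2.2.1 v hv1 hv2]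
      exact x.2.2.2 v hv1 hv2⟩
    invFun := fun y => ⟨Stmt8Aux.bwdX y.1,
      Stmt8Aux.bwdX_all y.1,
      Stmt8Aux.bwdX_wt hn hμ hl hsub y.1,
      fun j hj1 hj2 => by
        rw [Stmt8Aux.bwdX_cw hμ y.1 j hj1 hj2]
        exact y.2 j hj1 hj2⟩
    left_inv := fun x => Subtype.ext (Stmt8Aux.bwd_fwd x.1 hn hμ hl hsub x.2.1 x.2.2.1)
    right_inv := fun y => Subtype.ext (Stmt8Aux.YTab_ext (funext fun i => funext fun jj =>
      Stmt8Aux.fEnt_bwd hn hμ hl hsub y.1 i jj)) }, ?_⟩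
  intro x i j hj
  exact Stmt8Aux.fEnt_count x.1 hn hμ hl hsub x.2.1 x.2.2.1 i j hj
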